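/- Let C ⊆ ℝⁿ be a nonempty closed convex set and f : ℝⁿ → ℝ be continuously differentiable with ∇f L-Lipschitz on C (L > 0) and satisfying condition (B) on C. Let (x^k), (p^k), (v_k) be Frank–Wolfe sequences for f on C with v_k < 0 for all k. Then every limit point x̄ ∈ C of (x^k) is a stationary point of the problem min_{z∈C} f(z), i.e., ⟨∇f(x̄), q − x̄⟩ ≥ 0 for all q ∈ C. -/

import Mathlib

open scoped RealInnerProductSpace
open Filter

section Aux

variable {F : Type*} [NormedAddCommGroup F] [InnerProductSpace ℝ F] [CompleteSpace F]

lemma fw_grad_inner_eq (f : F → ℝ) (hf : ContDiff ℝ 1 f) (x v : F) :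
    ⟪gradient f x, v⟫ = fderiv ℝ f x v := by
  have h := (hf.differentiable one_ne_zero x).hasGradientAt
  rw [hasGradientAt_iff_hasFDerivAt] at h
  rw [h.fderiv]
  simp [InnerProductSpace.toDual_symm_apply]

lemma fw_grad_continuous (f : F → ℝ) (hf : ContDiff ℝ 1 f) :
    Continuous (fun x => gradient f x) := by
  have h1 : Continuous (fun x => fderiv ℝ f x) := hf.continuous_fderiv one_ne_zero
  have h2 : (fun x => gradient f x)
      = fun x => (InnerProductSpace.toDual ℝ F).symm (fderiv ℝ f x) := rfl
  rw [h2]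
  exact (InnerProductSpace.toDual ℝ F).symm.continuous.comp h1

lemma fw_descent_lemma {C : Set F} (hC : Convex ℝ C) (f : F → ℝ) (hf : ContDiff ℝ 1 f)
    {L : ℝ}
    (hLip : ∀ a ∈ C, ∀ b ∈ C, ‖gradient f a - gradient f b‖ ≤ L * ‖a - b‖)
    {x y : F} (hx : x ∈ C) (hy : y ∈ C) :
    f y ≤ f x + ⟪gradient f x, y - x⟫ + L / 2 * ‖y - x‖ ^ 2 := by
  set d := y - x with hd
  have hdiff := hf.differentiable one_ne_zero
  have hmem : ∀ t : ℝ, t ∈ Set.Icc (0:ℝ) 1 → x + t • d ∈ C := by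
    intro t ht
    have : x + t • d = (1 - t) • x + t • y := by
      rw [hd]; module
    rw [this]
    exact hC hx hy (by linarith [ht.1, ht.2]) ht.1 (by ring)
  set φ : ℝ → ℝ := fun t => f x + t * ⟪gradient f x, d⟫ + L / 2 * ‖d‖ ^ 2 * t ^ 2 - f (x + t • d)
    with hφ
  have hderiv : ∀ t : ℝ, HasDerivAt φ
      (⟪gradient f x, d⟫ + L * ‖d‖ ^ 2 * t - ⟪gradient f (x + t • d), d⟫) t := by
    intro t
    have h1 : HasDerivAt (fun t : ℝ => x + t • d) d t := by
      simpa using ((hasDerivAt_id t).smul_const d).const_add x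
    have h2 : HasDerivAt (fun t : ℝ => f (x + t • d)) (fderiv ℝ f (x + t • d) d) t :=
      (hdiff (x + t • d)).hasFDerivAt.comp_hasDerivAt t h1
    have h3 : HasDerivAt (fun t : ℝ => f x + t * ⟪gradient f x, d⟫ + L / 2 * ‖d‖ ^ 2 * t ^ 2)
        (⟪gradient f x, d⟫ + L * ‖d‖ ^ 2 * t) t := by
      have ha : HasDerivAt (fun t : ℝ => t * ⟪gradient f x, d⟫) ⟪gradient f x, d⟫ t := by
        simpa using (hasDerivAt_id t).mul_const ⟪gradient f x, d⟫
      have hb : HasDerivAt (fun t : ℝ => L / 2 * ‖d‖ ^ 2 * t ^ 2) (L / 2 * ‖d‖ ^ 2 * (2 * t)) t :=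
        (hasDerivAt_pow 2 t).const_mul _ |>.congr_deriv (by ring)
      have := (ha.const_add (f x)).add hb
      exact this.congr_deriv (by ring)
    have := h3.sub h2
    rw [fw_grad_inner_eq f hf (x + t • d) d]
    exact this
  have hmono : MonotoneOn φ (Set.Icc 0 1) := by
    apply monotoneOn_of_deriv_nonneg (convex_Icc 0 1)
    · exact Continuous.continuousOn (by
        apply Continuous.sub
        · continuity
        · exact (hf.continuous).comp (by continuity))
    · intro t ht
      exact (hderiv t).differentiableAt.differentiableWithinAt
    · intro t ht
      rw [interior_Icc] at ht
      rw [(hderiv t).deriv]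
      have hmem' := hmem t ⟨le_of_lt ht.1, le_of_lt ht.2⟩
      have hlip := hLip (x + t • d) hmem' x hx
      have hnorm : ‖x + t • d - x‖ = t * ‖d‖ := by
        rw [add_sub_cancel_left, norm_smul, Real.norm_eq_abs, abs_of_pos ht.1]
      have hinner : ⟪gradient f (x + t • d), d⟫ - ⟪gradient f x, d⟫
          ≤ L * (t * ‖d‖) * ‖d‖ := by
        rw [← inner_sub_left]
        calc ⟪gradient f (x + t • d) - gradient f x, d⟫
            ≤ ‖gradient f (x + t • d) - gradient f x‖ * ‖d‖ := real_inner_le_norm _ _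
          _ ≤ L * (t * ‖d‖) * ‖d‖ := by
              apply mul_le_mul_of_nonneg_right _ (norm_nonneg d)
              rw [← hnorm]; exact hlip
      nlinarith [norm_nonneg d]
  have := hmono (Set.left_mem_Icc.2 zero_le_one) (Set.right_mem_Icc.2 zero_le_one) zero_le_one
  simp only [hφ] at this
  simp only [zero_smul, add_zero, one_smul, zero_mul] at this
  have hy' : x + d = y := by rw [hd]; abel
  rw [hy'] at this
  nlinarith [this]

lemma fw_arith {L s v : ℝ} (hL : 0 < L) (hs : 0 < s) (hv : v < 0) :
    min 1 (|v| / (L * s)) * v + L / 2 * (min 1 (|v| / (L * s))) ^ 2 * s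
      ≤ - (min |v| (v ^ 2 / (L * s))) / 2 := by
  rw [abs_of_neg hv]
  have hLs : 0 < L * s := by positivity
  rcases le_total (-v / (L * s)) 1 with h | h
  · rw [min_eq_right h]
    have hmin : min (-v) (v ^ 2 / (L * s)) ≤ v ^ 2 / (L * s) := min_le_right _ _
    have heq : -v / (L * s) * v + L / 2 * (-v / (L * s)) ^ 2 * s
        = -(v ^ 2 / (L * s)) / 2 := by
      field_simp
      ring
    rw [heq]
    linarith
  · rw [min_eq_left h]
    have h1 : L * s ≤ -v := (one_le_div hLs).mp h
    have hmin : min (-v) (v ^ 2 / (L * s)) ≤ -v := min_le_left _ _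
    nlinarith

end Aux

/-- Every limit point `x̄ ∈ C` of a Frank–Wolfe sequence (under Lipschitz gradient and
condition (B)) is a stationary point of the problem of minimizing `f` over `C`. -/
theorem frank_wolfe_limit_point_stationary (n : ℕ) (C : Set (EuclideanSpace ℝ (Fin n)))
    (hCne : C.Nonempty) (hCcl : IsClosed C) (hCconv : Convex ℝ C)
    (f : EuclideanSpace ℝ (Fin n) → ℝ) (hf : ContDiff ℝ 1 f)
    (L : ℝ) (hL : 0 < L)
    (hLip : ∀ a ∈ C, ∀ b ∈ C, ‖gradient f a - gradient f b‖ ≤ L * ‖a - b‖)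
    (hB : ∀ a ∈ C, ∀ d : EuclideanSpace ℝ (Fin n),
      (∀ y ∈ C, ∀ t : ℝ, 0 ≤ t → y + t • d ∈ C) → d ≠ 0 → 0 < ⟪gradient f a, d⟫)
    (x p : ℕ → EuclideanSpace ℝ (Fin n)) (v : ℕ → ℝ)
    (hx0 : x 0 ∈ C) (hpC : ∀ k, p k ∈ C)
    (hpmin : ∀ k, ∀ q ∈ C, ⟪gradient f (x k), p k - x k⟫ ≤ ⟪gradient f (x k), q - x k⟫)
    (hv : ∀ k, v k = ⟪gradient f (x k), p k - x k⟫)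
    (hiter : ∀ k, x (k + 1) =
      x k + (min 1 (|v k| / (L * ‖p k - x k‖ ^ 2))) • (p k - x k))
    (hvneg : ∀ k, v k < 0)
    (xbar : EuclideanSpace ℝ (Fin n)) (hxbar : xbar ∈ C)
    (hlim : ∃ φ : ℕ → ℕ, StrictMono φ ∧
      Filter.Tendsto (fun j => x (φ j)) Filter.atTop (nhds xbar)) :
    ∀ q ∈ C, 0 ≤ ⟪gradient f xbar, q - xbar⟫ := by
  obtain ⟨φ, hφmono, hφlim⟩ := hlim
  -- basic notation
  set d : ℕ → EuclideanSpace ℝ (Fin n) := fun k => p k - x k with hd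
  have hdne : ∀ k, d k ≠ 0 := by
    intro k hk
    have := hv k
    rw [show p k - x k = d k from rfl, hk, inner_zero_right] at this
    exact absurd (this ▸ hvneg k) (lt_irrefl 0)
  have hdnorm : ∀ k, 0 < ‖d k‖ := fun k => norm_pos_iff.mpr (hdne k)
  set lam : ℕ → ℝ := fun k => min 1 (|v k| / (L * ‖d k‖ ^ 2)) with hlam
  have hlam0 : ∀ k, 0 ≤ lam k := fun k => le_min zero_le_one (by positivity)
  have hlam1 : ∀ k, lam k ≤ 1 := fun k => min_le_left _ _
  -- all iterates lie in C
  have hxC : ∀ k, x k ∈ C := by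
    intro k
    induction k with
    | zero => exact hx0
    | succ k ih =>
      rw [hiter k]
      have : x k + lam k • (p k - x k) = (1 - lam k) • x k + lam k • p k := by module
      rw [show (min 1 (|v k| / (L * ‖p k - x k‖ ^ 2))) = lam k from rfl, this]
      exact hCconv ih (hpC k) (by linarith [hlam1 k]) (hlam0 k) (by ring)
  -- sufficient decrease
  set δ : ℕ → ℝ := fun k => min (|v k|) (v k ^ 2 / (L * ‖d k‖ ^ 2)) with hδ
  have hδ0 : ∀ k, 0 ≤ δ k := fun k => le_min (abs_nonneg _) (by positivity)
  have hdec : ∀ k, f (x (k + 1)) ≤ f (x k) - δ k / 2 := by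
    intro k
    have hdesc := fw_descent_lemma hCconv f hf hLip (hxC k) (hxC (k + 1))
    have hstep : x (k + 1) - x k = lam k • d k := by
      rw [hiter k]
      show x k + lam k • d k - x k = lam k • d k
      exact add_sub_cancel_left _ _
    rw [hstep] at hdesc
    rw [real_inner_smul_right, ← hv k, norm_smul, mul_pow, Real.norm_eq_abs,
      abs_of_nonneg (hlam0 k)] at hdesc
    have harith := fw_arith (s := ‖d k‖ ^ 2) (v := v k) hL (pow_pos (hdnorm k) 2) (hvneg k)
    have : lam k * v k + L / 2 * lam k ^ 2 * ‖d k‖ ^ 2 ≤ - δ k / 2 := harith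
    calc f (x (k + 1)) ≤ f (x k) + (lam k * v k + L / 2 * lam k ^ 2 * ‖d k‖ ^ 2) := by
          linarith [hdesc]
      _ ≤ f (x k) - δ k / 2 := by linarith
  -- f (x k) is antitone, hence converges (subsequence converges), so δ → 0
  have hanti : Antitone fun k => f (x k) :=
    antitone_nat_of_succ_le fun k => by linarith [hdec k, hδ0 k]
  have hfsub : Tendsto (fun j => f (x (φ j))) atTop (nhds (f xbar)) :=
    (hf.continuous.tendsto xbar).comp hφlim
  have hδlim : Tendsto δ atTop (nhds 0) := by
    rcases tendsto_of_antitone hanti with hbot | ⟨l, hl⟩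
    · exfalso
      have : Tendsto (fun j => f (x (φ j))) atTop atBot := hbot.comp hφmono.tendsto_atTop
      exact not_tendsto_nhds_of_tendsto_atBot this (f xbar) hfsub
    · have hdiff : Tendsto (fun k => f (x k) - f (x (k + 1))) atTop (nhds 0) := by
        have h2 : Tendsto (fun k => f (x (k + 1))) atTop (nhds l) :=
          hl.comp (tendsto_add_atTop_nat 1)
        simpa using hl.sub h2
      have hhalf : Tendsto (fun k => δ k / 2) atTop (nhds 0) :=
        squeeze_zero (fun k => by linarith [hδ0 k]) (fun k => by linarith [hdec k]) hdiff
      have := hhalf.const_mul 2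
      simpa [mul_div_cancel₀] using this
  -- main argument
  intro q hq
  by_contra hcon
  push_neg at hcon
  set ε : ℝ := -⟪gradient f xbar, q - xbar⟫ with hε
  have hεpos : 0 < ε := by simp only [hε]; linarith
  have hgc : Continuous fun z => gradient f z := fw_grad_continuous f hf
  have hcont : Continuous fun z : EuclideanSpace ℝ (Fin n) => ⟪gradient f z, q - z⟫ :=
    hgc.inner (continuous_const.sub continuous_id)
  have htend : Tendsto (fun j => ⟪gradient f (x (φ j)), q - x (φ j)⟫) atTop
      (nhds ⟪gradient f xbar, q - xbar⟫) := (hcont.tendsto xbar).comp hφlim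
  have hvb : ∀ᶠ j in atTop, v (φ j) ≤ -ε / 2 := by
    have hlt : ⟪gradient f xbar, q - xbar⟫ < -ε / 2 := by
      simp only [hε]; linarith
    filter_upwards [htend.eventually (eventually_lt_nhds hlt)] with j hj
    calc v (φ j) = ⟪gradient f (x (φ j)), p (φ j) - x (φ j)⟫ := hv _
      _ ≤ ⟪gradient f (x (φ j)), q - x (φ j)⟫ := hpmin _ q hq
      _ ≤ -ε / 2 := le_of_lt hj
  have hδφ : Tendsto (fun j => δ (φ j)) atTop (nhds 0) := hδlim.comp hφmono.tendsto_atTop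
  have hδsmall : ∀ᶠ j in atTop, δ (φ j) < ε / 2 :=
    hδφ.eventually (eventually_lt_nhds (by linarith))
  -- eventually δ (φ j) = v²/(L‖d‖²)
  set b : ℕ → ℝ := fun j => v (φ j) ^ 2 / (L * ‖d (φ j)‖ ^ 2) with hb
  have hbev : ∀ᶠ j in atTop, b j = δ (φ j) := by
    filter_upwards [hvb, hδsmall] with j h1 h2
    have habs : ε / 2 ≤ |v (φ j)| := by
      rw [abs_of_neg (hvneg (φ j))]; linarith
    have : δ (φ j) = min (|v (φ j)|) (b j) := rfl
    rcases min_cases (|v (φ j)|) (b j) with ⟨he, _⟩ | ⟨he, _⟩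
    · exfalso; rw [this, he] at h2; linarith
    · rw [this, he]
  have hb0 : Tendsto b atTop (nhds 0) := Tendsto.congr' (hbev.mono fun j h => h.symm) hδφ
  have hbpos : ∀ j, 0 < b j := by
    intro j
    have : v (φ j) ≠ 0 := ne_of_lt (hvneg (φ j))
    have h1 : 0 < v (φ j) ^ 2 := by positivity
    have h2 : 0 < L * ‖d (φ j)‖ ^ 2 := mul_pos hL (pow_pos (hdnorm _) 2)
    exact div_pos h1 h2
  -- ‖d (φ j)‖ → ∞
  have hdtop : Tendsto (fun j => ‖d (φ j)‖) atTop atTop := by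
    have hseq : ∀ j, ‖d (φ j)‖ ^ 2 = v (φ j) ^ 2 / (L * b j) := by
      intro j
      have hv2 : v (φ j) ^ 2 ≠ 0 := pow_ne_zero 2 (ne_of_lt (hvneg (φ j)))
      have hLd : L * ‖d (φ j)‖ ^ 2 ≠ 0 := ne_of_gt (mul_pos hL (pow_pos (hdnorm _) 2))
      rw [hb]
      field_simp
      exact (mul_div_cancel_right₀ _ (ne_of_lt (hvneg (φ j)))).symm
    have hbin : Tendsto (fun j => (L * b j)⁻¹) atTop atTop := by
      apply Tendsto.inv_tendsto_nhdsGT_zero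
      apply tendsto_nhdsWithin_of_tendsto_nhds_of_eventually_within
      · simpa using hb0.const_mul L
      · filter_upwards with j
        exact Set.mem_Ioi.mpr (mul_pos hL (hbpos j))
    have hsqtop : Tendsto (fun j => ‖d (φ j)‖ ^ 2) atTop atTop := by
      apply tendsto_atTop_mono' atTop _ (hbin.const_mul_atTop (show (0:ℝ) < ε ^ 2 / 4 by positivity))
      filter_upwards [hvb] with j hj
      rw [hseq j]
      have h1 : ε ^ 2 / 4 ≤ v (φ j) ^ 2 := by nlinarith
      have h2 : 0 < L * b j := mul_pos hL (hbpos j)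
      rw [div_eq_mul_inv]
      exact mul_le_mul_of_nonneg_right h1 (by positivity)
    rw [tendsto_atTop] at hsqtop ⊢
    intro M
    filter_upwards [hsqtop ((max M 0) ^ 2)] with j hj
    have h0 : max M 0 ≤ ‖d (φ j)‖ :=
      le_of_pow_le_pow_left₀ two_ne_zero (norm_nonneg _) hj
    exact le_trans (le_max_left M 0) h0
  -- compactness: unit directions have a convergent subsequence
  set u : ℕ → EuclideanSpace ℝ (Fin n) := fun j => ‖d (φ j)‖⁻¹ • d (φ j) with hu
  have humem : ∀ j, u j ∈ Metric.sphere (0 : EuclideanSpace ℝ (Fin n)) 1 := by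
    intro j
    rw [mem_sphere_zero_iff_norm]
    exact norm_smul_inv_norm (hdne (φ j))
  obtain ⟨ubar, hubar_mem, ψ, hψmono, hψlim⟩ :=
    (isCompact_sphere (0 : EuclideanSpace ℝ (Fin n)) 1).tendsto_subseq humem
  have hubar_ne : ubar ≠ 0 := by
    intro h
    rw [mem_sphere_zero_iff_norm, h, norm_zero] at hubar_mem
    norm_num at hubar_mem
  have hxψlim : Tendsto (fun j => x (φ (ψ j))) atTop (nhds xbar) :=
    hφlim.comp hψmono.tendsto_atTop
  have hdψtop : Tendsto (fun j => ‖d (φ (ψ j))‖) atTop atTop :=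
    hdtop.comp hψmono.tendsto_atTop
  -- ubar is in the asymptotic cone of C
  have hcone : ∀ y ∈ C, ∀ t : ℝ, 0 ≤ t → y + t • ubar ∈ C := by
    intro y hy t ht
    rcases eq_or_lt_of_le ht with rfl | htpos
    · simpa using hy
    · set μ : ℕ → ℝ := fun j => t / ‖d (φ (ψ j))‖ with hμ
      have hμ0 : Tendsto μ atTop (nhds 0) :=
        Tendsto.div_atTop tendsto_const_nhds hdψtop
      have hμpos : ∀ j, 0 < μ j := fun j => div_pos htpos (hdnorm _)
      have hμle : ∀ᶠ j in atTop, μ j ≤ 1 := by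
        filter_upwards [hdψtop.eventually_ge_atTop t] with j hj
        exact div_le_one_of_le₀ hj (norm_nonneg _)
      set c : ℕ → EuclideanSpace ℝ (Fin n) := fun j => y + μ j • (p (φ (ψ j)) - y) with hc
      have hcC : ∀ᶠ j in atTop, c j ∈ C := by
        filter_upwards [hμle] with j hj
        have : c j = (1 - μ j) • y + μ j • p (φ (ψ j)) := by rw [hc]; module
        rw [this]
        exact hCconv hy (hpC _) (by linarith) (le_of_lt (hμpos j)) (by ring)
      have hcrepr : ∀ j, c j = y + t • (u (ψ j)) + μ j • (x (φ (ψ j)) - y) := by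
        intro j
        simp only [hc, hu, hμ, hd]
        rw [smul_smul, ← div_eq_mul_inv, add_assoc, ← smul_add, sub_add_sub_cancel]
      have hclim : Tendsto c atTop (nhds (y + t • ubar)) := by
        have h1 : Tendsto (fun j => t • (u (ψ j))) atTop (nhds (t • ubar)) :=
          (hψlim.const_smul t)
        have h2 : Tendsto (fun j => μ j • (x (φ (ψ j)) - y)) atTop
            (nhds ((0:ℝ) • (xbar - y))) :=
          hμ0.smul ((hxψlim.sub tendsto_const_nhds))
        rw [zero_smul] at h2
        have := (tendsto_const_nhds (x := y) (f := atTop)).add h1 |>.add h2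
        rw [add_zero] at this
        exact Tendsto.congr (fun j => (hcrepr j).symm) this
      exact hCcl.mem_of_tendsto hclim hcC
  -- contradiction with condition (B)
  have hBpos : 0 < ⟪gradient f xbar, ubar⟫ := hB xbar hxbar ubar hcone hubar_ne
  have hwlim : Tendsto (fun j => ⟪gradient f (x (φ (ψ j))), u (ψ j)⟫) atTop
      (nhds ⟪gradient f xbar, ubar⟫) :=
    Tendsto.inner ((hgc.tendsto xbar).comp hxψlim) hψlim
  have hwneg : ∀ j, ⟪gradient f (x (φ (ψ j))), u (ψ j)⟫ ≤ 0 := by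
    intro j
    rw [hu]
    simp only
    rw [real_inner_smul_right]
    have : ⟪gradient f (x (φ (ψ j))), d (φ (ψ j))⟫ = v (φ (ψ j)) := (hv _).symm
    rw [this]
    have h1 : (0:ℝ) ≤ ‖d (φ (ψ j))‖⁻¹ := by positivity
    have h2 : v (φ (ψ j)) ≤ 0 := le_of_lt (hvneg _)
    exact mul_nonpos_of_nonneg_of_nonpos h1 h2
  have : ⟪gradient f xbar, ubar⟫ ≤ 0 := le_of_tendsto' hwlim hwneg
  linarith
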